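/- Let p ≥ 1 and let ψ₁,…,ψ_p be positive and pairwise distinct. Define f(s) = (1/V(Ψ)) · det M(s), where M(s) is the p×p matrix whose first column has entries ψᵢ/(1+ψᵢ s)² and whose j-th column (2 ≤ j ≤ p) has entries ψᵢ^{j-1}, and V(Ψ) = ∏_{1≤i<j≤p}(ψⱼ − ψᵢ) is the Vandermonde determinant. Then for all s ≥ 0, ∫₀^s f(x) dx = (∏_{i=1}^p ψᵢ) s^p / ∏_{i=1}^p (1 + ψᵢ s). -/

import Mathlib

open Finset Matrix

lemma aux_cof (n : ℕ) (ψ u : Fin (n+1) → ℝ) :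
    (Matrix.of fun i j : Fin (n+1) => if (j : ℕ) = 0 then u i else ψ i ^ (j : ℕ)).det
      = ∑ i : Fin (n+1), (-1) ^ (i : ℕ) * u i *
        ((Matrix.of fun i j : Fin (n+1) => ψ i ^ (j : ℕ)).submatrix i.succAbove Fin.succ).det := by
  rw [Matrix.det_succ_column_zero]
  refine Finset.sum_congr rfl fun i _ => ?_
  have h0 : (Matrix.of fun i j : Fin (n+1) =>
      if (j : ℕ) = 0 then u i else ψ i ^ (j : ℕ)) i 0 = u i := by simp
  rw [h0]
  congr 1

lemma aux_det (n : ℕ) (ψ : Fin (n+1) → ℝ) (s : ℝ) (hne : ∀ i, 1 + ψ i * s ≠ 0) :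
    (Matrix.of fun i j : Fin (n+1) =>
        if (j : ℕ) = 0 then ψ i * s / (1 + ψ i * s) else ψ i ^ (j : ℕ)).det
      = (∏ i, ψ i) * (∏ i, ∏ j ∈ Finset.Ioi i, (ψ j - ψ i)) * s ^ (n+1)
          / ∏ i, (1 + ψ i * s) := by
  have hprod : (∏ i, (1 + ψ i * s)) ≠ 0 := Finset.prod_ne_zero_iff.2 fun i _ => hne i
  rw [eq_div_iff hprod]
  set C : Matrix (Fin (n+1)) (Fin (n+1)) ℝ :=
    Matrix.of fun j k : Fin (n+1) =>
      (if j = k then s else 0) + (if (j : ℕ) + 1 = (k : ℕ) then 1 else 0) with hCdef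
  have hC : C.det = s ^ (n+1) := by
    rw [Matrix.det_of_upperTriangular]
    · have h : ∀ j : Fin (n+1), C j j = s := by intro j; simp [hCdef]
      rw [Finset.prod_congr rfl fun j _ => h j]
      simp
    · intro i j hij
      have h1 : i ≠ j := (ne_of_lt hij).symm
      have h2 : (i : ℕ) + 1 ≠ (j : ℕ) := by
        have hji : (j : ℕ) < (i : ℕ) := by simpa using hij
        omega
      simp [hCdef, h1, h2]
  -- N = vandermonde * C
  have hN : (Matrix.of fun i k : Fin (n+1) =>
        s * ψ i ^ (k : ℕ) + (if (k : ℕ) = 0 then 0 else ψ i ^ ((k : ℕ) - 1)))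
      = Matrix.vandermonde ψ * C := by
    ext i k
    rw [Matrix.mul_apply]
    have step : ∀ j : Fin (n+1), Matrix.vandermonde ψ i j * C j k
        = (if j = k then ψ i ^ (j : ℕ) * s else 0)
          + (if (j : ℕ) + 1 = (k : ℕ) then ψ i ^ (j : ℕ) else 0) := by
      intro j
      simp only [Matrix.vandermonde_apply, hCdef, Matrix.of_apply, mul_add, mul_ite, mul_zero,
        mul_one]
    rw [Finset.sum_congr rfl fun j _ => step j, Finset.sum_add_distrib]
    have e1 : (∑ j : Fin (n+1), if j = k then ψ i ^ (j : ℕ) * s else 0) = ψ i ^ (k : ℕ) * s := by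
      rw [Finset.sum_ite_eq' Finset.univ k (fun j => ψ i ^ (j : ℕ) * s)]
      simp
    have e2 : (∑ j : Fin (n+1), if (j : ℕ) + 1 = (k : ℕ) then ψ i ^ (j : ℕ) else 0)
        = (if (k : ℕ) = 0 then 0 else ψ i ^ ((k : ℕ) - 1)) := by
      rcases Nat.eq_zero_or_pos (k : ℕ) with hk | hk
      · rw [hk]
        refine Finset.sum_eq_zero fun j _ => ?_
        simp
      · rw [if_neg (by omega)]
        rw [Finset.sum_eq_single (⟨(k : ℕ) - 1, by omega⟩ : Fin (n+1))
          (fun j _ hj => if_neg (fun h => hj (Fin.ext (by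
            simpa using (by omega : (j : ℕ) = (k : ℕ) - 1)))))
          (fun h => absurd (Finset.mem_univ _) h)]
        rw [if_pos (by simpa using (by omega : (k : ℕ) - 1 + 1 = (k : ℕ)))]
    rw [e1, e2]
    simp only [Matrix.of_apply]
    ring
  set A : Matrix (Fin (n+1)) (Fin (n+1)) ℝ := Matrix.of fun i j : Fin (n+1) =>
      if (j : ℕ) = 0 then ψ i * s / (1 + ψ i * s) else ψ i ^ (j : ℕ) with hAdef
  set N : Matrix (Fin (n+1)) (Fin (n+1)) ℝ := Matrix.of fun i k : Fin (n+1) =>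
      s * ψ i ^ (k : ℕ) + (if (k : ℕ) = 0 then 0 else ψ i ^ ((k : ℕ) - 1)) with hNdef
  have e2 : (Matrix.of fun i j : Fin (n+1) => (1 + ψ i * s) * A i j)
      = Matrix.of fun i j : Fin (n+1) => ψ i * N i j := by
    ext i j
    simp only [Matrix.of_apply, hAdef, hNdef]
    by_cases hj : (j : ℕ) = 0
    · rw [if_pos hj, if_pos hj, hj, pow_zero]
      field_simp
      rw [mul_div_assoc, div_self (hne i)]
      ring
    · rw [if_neg hj, if_neg hj]
      have hp : ψ i ^ (j : ℕ) = ψ i ^ ((j : ℕ) - 1) * ψ i := by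
        rw [← pow_succ]
        congr 1
        omega
      rw [hp]
      ring
  have e1 : Matrix.det (Matrix.of fun i j : Fin (n+1) => (1 + ψ i * s) * A i j)
      = (∏ i, (1 + ψ i * s)) * A.det := Matrix.det_mul_column _ _
  have e3 : Matrix.det (Matrix.of fun i j : Fin (n+1) => ψ i * N i j)
      = (∏ i, ψ i) * N.det := Matrix.det_mul_column _ _
  have e4 : N.det = (∏ i, ∏ j ∈ Finset.Ioi i, (ψ j - ψ i)) * s ^ (n+1) := by
    rw [hN, Matrix.det_mul, Matrix.det_vandermonde, hC]
  have := e1.symm.trans ((congrArg Matrix.det e2).trans e3)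
  rw [e4] at this
  linarith [this]

/-- The key integral computation in Lemma A.6 (case n = p) of the paper. -/
theorem stmt_4 (p : ℕ) (hp : 1 ≤ p) (ψ : Fin p → ℝ)
    (hpos : ∀ i, 0 < ψ i) (hdist : ∀ i j, i ≠ j → ψ i ≠ ψ j)
    (V : ℝ) (hV : V = ∏ i, ∏ j ∈ Finset.Ioi i, (ψ j - ψ i))
    (f : ℝ → ℝ)
    (hf : ∀ s : ℝ, f s = (1 / V) *
      (Matrix.of fun i j : Fin p =>
        if (j : ℕ) = 0 then ψ i / (1 + ψ i * s) ^ 2 else ψ i ^ (j : ℕ)).det)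
    (s : ℝ) (hs : 0 ≤ s) :
    ∫ x in (0 : ℝ)..s, f x =
      (∏ i, ψ i) * s ^ p / ∏ i, (1 + ψ i * s) := by
  obtain ⟨n, rfl⟩ : ∃ n, p = n + 1 := ⟨p - 1, (Nat.succ_pred_eq_of_pos hp).symm⟩
  set c : Fin (n+1) → ℝ := fun i =>
    ((Matrix.of fun i j : Fin (n+1) => ψ i ^ (j : ℕ)).submatrix i.succAbove Fin.succ).det
    with hc
  have hden : ∀ (i : Fin (n+1)) (x : ℝ), 0 ≤ x → (0:ℝ) < 1 + ψ i * x := by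
    intro i x hx
    nlinarith [hpos i, mul_nonneg (hpos i).le hx]
  have hVne : V ≠ 0 := by
    rw [hV]
    refine Finset.prod_ne_zero_iff.2 fun i _ => Finset.prod_ne_zero_iff.2 fun j hj => ?_
    exact sub_ne_zero.2 (hdist j i (ne_of_gt (Finset.mem_Ioi.1 hj)))
  set g : ℝ → ℝ := fun x =>
    (1/V) * ∑ i : Fin (n+1), (-1)^(i:ℕ) * (ψ i / (1 + ψ i * x)^2) * c i with hg
  have hfg : f = g := by
    funext x
    rw [hf x, hg, aux_cof n ψ (fun i => ψ i / (1 + ψ i * x)^2)]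
  set F : ℝ → ℝ := fun t =>
    (1/V) * ∑ i : Fin (n+1), (-1)^(i:ℕ) * (-1/(1 + ψ i * t)) * c i with hFdef
  have hderiv : ∀ x ∈ Set.uIcc (0:ℝ) s, HasDerivAt F (g x) x := by
    intro x hx
    rw [Set.uIcc_of_le hs] at hx
    have hx0 : 0 ≤ x := hx.1
    apply HasDerivAt.const_mul
    apply HasDerivAt.fun_sum
    intro i _
    have hne : (1 + ψ i * x) ≠ 0 := (hden i x hx0).ne'
    have h1 : HasDerivAt (fun t : ℝ => 1 + ψ i * t) (ψ i) x := by
      simpa using ((hasDerivAt_id x).const_mul (ψ i)).const_add 1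
    have h2 : HasDerivAt (fun t : ℝ => -1/(1 + ψ i * t)) (ψ i / (1 + ψ i * x)^2) x := by
      simpa [neg_div, one_div, Pi.neg_def, Pi.inv_def] using (h1.inv hne).neg
    exact (h2.const_mul ((-1:ℝ)^(i:ℕ))).mul_const (c i)
  have hcont : ContinuousOn g (Set.uIcc (0:ℝ) s) := by
    rw [Set.uIcc_of_le hs, hg]
    refine continuousOn_const.mul (continuousOn_finset_sum _ fun i _ => ?_)
    refine (continuousOn_const.mul (ContinuousOn.div continuousOn_const ?_ ?_)).mul
      continuousOn_const
    · exact (Continuous.continuousOn (by continuity))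
    · exact fun x hx => pow_ne_zero 2 (hden i x hx.1).ne'
  rw [hfg, intervalIntegral.integral_eq_sub_of_hasDerivAt hderiv hcont.intervalIntegrable]
  have hsum : F s - F 0 = (1/V) * ∑ i : Fin (n+1),
      (-1)^(i:ℕ) * (ψ i * s / (1 + ψ i * s)) * c i := by
    rw [hFdef]
    simp only
    rw [← mul_sub, ← Finset.sum_sub_distrib]
    congr 1
    refine Finset.sum_congr rfl fun i _ => ?_
    have hne : (1 + ψ i * s) ≠ 0 := (hden i s hs).ne'
    rw [mul_zero, add_zero]
    field_simp
    ring
  rw [hsum, ← aux_cof n ψ (fun i => ψ i * s / (1 + ψ i * s)),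
    aux_det n ψ s (fun i => (hden i s hs).ne'), ← hV]
  rw [mul_comm (∏ i : Fin (n+1), ψ i) V, mul_assoc, mul_div_assoc, one_div,
    inv_mul_cancel_left₀ hVne]
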